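/- Fix q ∈ V. The map O ↦ c(O), where c(O)(v) = indeg_O(v) − 1 for v ≠ q, is a bijection between acyclic orientations of G with unique source q and maximal superstable configurations with respect to q. -/

import Mathlib

open Finset

/-- A finite loopless undirected multigraph on vertex set `V`, given by symmetric
edge multiplicities. -/
structure Multigraph (V : Type) where
  E : V → V → ℕ
  symm : ∀ u v, E u v = E v u
  loopless : ∀ v, E v v = 0

variable {V : Type} [Fintype V] [DecidableEq V]

/-- The valence (degree) of a vertex: number of incident edges. -/
def Multigraph.val (G : Multigraph V) (v : V) : ℕ := ∑ w, G.E v w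

/-- Connectivity of a multigraph. -/
def Multigraph.Connected (G : Multigraph V) : Prop :=
  ∀ u v : V, Relation.ReflTransGen (fun a b => 0 < G.E a b) u v

/-- Degree of a divisor. -/
def divDeg (D : V → ℤ) : ℤ := ∑ v, D v

/-- The graph Laplacian applied to a firing script. -/
def lap (G : Multigraph V) (σ : V → ℤ) : V → ℤ :=
  fun v => ∑ w, (G.E v w : ℤ) * (σ v - σ w)

/-- Lending move at `v`. -/
def lend (G : Multigraph V) (D : V → ℤ) (v : V) : V → ℤ :=
  fun w => if w = v then D v - (G.val v : ℤ) else D w + (G.E v w : ℤ)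

/-- Borrowing move at `v`. -/
def borrow (G : Multigraph V) (D : V → ℤ) (v : V) : V → ℤ :=
  fun w => if w = v then D v + (G.val v : ℤ) else D w - (G.E v w : ℤ)

/-- Linear equivalence: generated by lending moves. -/
def LinEquiv (G : Multigraph V) : (V → ℤ) → (V → ℤ) → Prop :=
  Relation.ReflTransGen (fun D D' => ∃ v, D' = lend G D v)

/-- An orientation of a multigraph: each of the `G.E u v` edges between `u` and `v` is
directed, `dir u v` of them from `u` to `v`. -/
structure GraphOrientation (G : Multigraph V) where
  dir : V → V → ℕ
  compat : ∀ u v, dir u v + dir v u = G.E u v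

/-- Indegree of a vertex under an orientation. -/
def GraphOrientation.indeg {G : Multigraph V} (O : GraphOrientation G) (v : V) : ℕ := ∑ u, O.dir u v

/-- Outdegree of a vertex under an orientation. -/
def GraphOrientation.outdeg {G : Multigraph V} (O : GraphOrientation G) (v : V) : ℕ := ∑ u, O.dir v u

/-- An orientation is acyclic if it has no directed cycle. -/
def GraphOrientation.Acyclic {G : Multigraph V} (O : GraphOrientation G) : Prop :=
  ∀ v, ¬ Relation.TransGen (fun a b => 0 < O.dir a b) v v

/-- The number of edges of the multigraph. -/
def edgeCount (G : Multigraph V) : ℕ := (∑ u, ∑ w, G.E u w) / 2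

/-- The genus of the multigraph, `g = |E| - |V| + 1`. -/
def genus (G : Multigraph V) : ℤ := (edgeCount G : ℤ) - (Fintype.card V : ℤ) + 1

variable (q : V)

/-- Outdegree of `v ∈ S` with respect to a set `S` of non-`q` vertices: the number of
edges from `v` to vertices outside `S`. -/
def outdegC (G : Multigraph V) (S : Finset {v : V // v ≠ q}) (v : {v : V // v ≠ q}) : ℤ :=
  (G.val v.1 : ℤ) - ∑ w ∈ S, (G.E v.1 w.1 : ℤ)

/-- A configuration `c : V \ {q} → ℤ` is superstable: nonnegative, and every nonempty
`S ⊆ V \ {q}` contains a vertex `v` with `c v < outdeg_S v`. -/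
def SuperstableC (G : Multigraph V) (c : {v : V // v ≠ q} → ℤ) : Prop :=
  (∀ v, 0 ≤ c v) ∧
  ∀ S : Finset {v : V // v ≠ q}, S.Nonempty → ∃ v ∈ S, c v < outdegC q G S v

/-- A maximal superstable configuration. -/
def MaximalSuperstableC (G : Multigraph V) (c : {v : V // v ≠ q} → ℤ) : Prop :=
  SuperstableC q G c ∧
    ∀ c' : {v : V // v ≠ q} → ℤ, SuperstableC q G c' → (∀ v, c v ≤ c' v) → c' = c

/-! ### Auxiliary lemmas -/

/-- In a finite acyclic relation, every nonempty finset has a source (no incoming edge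
from within the finset). -/
lemma exists_source_in (R : V → V → Prop) (hR : ∀ v, ¬ Relation.TransGen R v v)
    (S : Finset V) (hS : S.Nonempty) : ∃ v ∈ S, ∀ w ∈ S, ¬ R w v := by
  haveI : IsTrans V (Relation.TransGen R) := ⟨fun _ _ _ => Relation.TransGen.trans⟩
  haveI : IsIrrefl V (Relation.TransGen R) := ⟨hR⟩
  have hwf := Finite.wellFounded_of_trans_of_irrefl (Relation.TransGen R)
  obtain ⟨v, hv, hmin⟩ := hwf.has_min (↑S) (by exact_mod_cast hS)
  exact ⟨v, hv, fun w hw hw' => hmin w hw (Relation.TransGen.single hw')⟩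

lemma mem_take_iff_indexOf_lt {α : Type*} [BEq α] [LawfulBEq α] :
    ∀ (ℓ : List α) (w : α), w ∈ ℓ → ∀ i, (w ∈ ℓ.take i ↔ ℓ.idxOf w < i)
  | [], w, hw, _ => by simp at hw
  | a :: t, w, _, 0 => by simp
  | a :: t, w, hw, (i+1) => by
    by_cases h : w = a
    · subst h; simp [List.idxOf_cons_self]
    · have hwt : w ∈ t := by
        rcases List.mem_cons.1 hw with h' | h'
        · exact absurd h' h
        · exact h'
      rw [List.take_succ_cons, List.idxOf_cons_ne _ (Ne.symm h)]
      constructor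
      · intro hm
        rcases List.mem_cons.1 hm with h' | h'
        · exact absurd h' h
        · exact Nat.succ_lt_succ ((mem_take_iff_indexOf_lt t w hwt i).1 h')
      · intro h'
        exact List.mem_cons.2 (Or.inr
          ((mem_take_iff_indexOf_lt t w hwt i).2 (Nat.lt_of_succ_lt_succ h')))

lemma indeg_add_outdeg {G : Multigraph V} (O : GraphOrientation G) (v : V) :
    O.outdeg v + O.indeg v = G.val v := by
  unfold GraphOrientation.indeg GraphOrientation.outdeg Multigraph.val
  rw [← Finset.sum_add_distrib]
  exact Finset.sum_congr rfl fun w _ => O.compat v w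

lemma sum_indeg_eq {G : Multigraph V} (O O' : GraphOrientation G) :
    ∑ v, O.indeg v = ∑ v, O'.indeg v := by
  have key : ∀ P : GraphOrientation G, 2 * ∑ v, P.indeg v = ∑ u, ∑ w, G.E u w := by
    intro P
    unfold GraphOrientation.indeg
    rw [two_mul]
    calc (∑ v, ∑ u, P.dir u v) + ∑ v, ∑ u, P.dir u v
        = (∑ u, ∑ v, P.dir u v) + ∑ u, ∑ v, P.dir v u := by
          rw [Finset.sum_comm (f := fun u v => P.dir u v)]
      _ = ∑ u, ∑ v, (P.dir u v + P.dir v u) := by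
          rw [← Finset.sum_add_distrib]
          exact Finset.sum_congr rfl fun u _ => Finset.sum_add_distrib.symm
      _ = ∑ u, ∑ w, G.E u w :=
          Finset.sum_congr rfl fun u _ => Finset.sum_congr rfl fun w _ => P.compat u w
  have h1 := key O
  have h2 := key O'
  omega

variable {q}

/-- Splitting a sum over all vertices into the `q` term and the non-`q` terms. -/
lemma sum_split_q (f : V → ℕ) :
    ∑ v, f v = f q + ∑ v : {v : V // v ≠ q}, f v.1 := by
  rw [← Finset.add_sum_erase _ _ (Finset.mem_univ q)]
  congr 1
  exact Finset.sum_subtype _ (by simp) _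

variable (q)

/-! ### Superstability of orientation configurations -/

lemma superstable_of_orientation (G : Multigraph V) (O : GraphOrientation G)
    (hac : O.Acyclic) (hsrc : ∀ v, O.indeg v = 0 → v = q) :
    SuperstableC q G (fun v => (O.indeg v.1 : ℤ) - 1) := by
  constructor
  · intro v
    show (0:ℤ) ≤ (O.indeg v.1 : ℤ) - 1
    have : O.indeg v.1 ≠ 0 := fun h => v.2 (hsrc v.1 h)
    omega
  · intro S hS
    obtain ⟨v, hvS', hmin⟩ := exists_source_in (fun a b => 0 < O.dir a b) hac
      (S.image Subtype.val) (hS.image _)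
    obtain ⟨v', hv'S, hv'⟩ := Finset.mem_image.1 hvS'
    subst hv'
    refine ⟨v', hv'S, ?_⟩
    show (O.indeg v'.1 : ℤ) - 1 < outdegC q G S v'
    unfold outdegC
    have hval := indeg_add_outdeg O v'.1
    have hSsum : ∑ w ∈ S, G.E v'.1 w.1 ≤ O.outdeg v'.1 := by
      have h1 : ∀ w ∈ S, G.E v'.1 w.1 = O.dir v'.1 w.1 := by
        intro w hw
        have hzero : O.dir w.1 v'.1 = 0 := by
          have := hmin w.1 (Finset.mem_image_of_mem _ hw)
          omega
        have := O.compat v'.1 w.1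
        omega
      rw [Finset.sum_congr rfl h1]
      have h2 : ∑ w ∈ S, O.dir v'.1 w.1 = ∑ u ∈ S.image Subtype.val, O.dir v'.1 u :=
        (Finset.sum_image (by intro a _ b _ h; exact Subtype.ext h)).symm
      rw [h2]
      exact Finset.sum_le_sum_of_subset (Finset.subset_univ _)
    have hcast : ∑ w ∈ S, (G.E v'.1 w.1 : ℤ) = ((∑ w ∈ S, G.E v'.1 w.1 : ℕ) : ℤ) := by
      push_cast; ring
    rw [hcast]
    omega

/-! ### The greedy list construction -/

lemma exists_good_list (G : Multigraph V) (c : {v : V // v ≠ q} → ℤ)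
    (hc : SuperstableC q G c) (S : Finset {v : V // v ≠ q}) :
    ∃ ℓ : List {v : V // v ≠ q}, ℓ.Nodup ∧ ℓ.toFinset = S ∧
      ∀ i (h : i < ℓ.length),
        c (ℓ.get ⟨i, h⟩) < outdegC q G (S \ (ℓ.take i).toFinset) (ℓ.get ⟨i, h⟩) := by
  induction S using Finset.strongInduction with
  | _ S ih =>
    rcases S.eq_empty_or_nonempty with rfl | hS
    · exact ⟨[], by simp, by simp, fun i h => by simp at h⟩
    · obtain ⟨v, hvS, hv⟩ := hc.2 S hS
      obtain ⟨ℓ', h1, h2, h3⟩ := ih (S.erase v) (Finset.erase_ssubset hvS)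
      have hvℓ' : v ∉ ℓ' := by
        intro hmem
        have : v ∈ S.erase v := h2 ▸ List.mem_toFinset.2 hmem
        simp at this
      refine ⟨v :: ℓ', List.nodup_cons.2 ⟨hvℓ', h1⟩, by rw [List.toFinset_cons, h2,
        Finset.insert_erase hvS], ?_⟩
      intro i h
      match i with
      | 0 =>
        simpa using hv
      | (j+1) =>
        have hj : j < ℓ'.length := Nat.lt_of_succ_lt_succ h
        have hset : S \ ((v :: ℓ').take (j+1)).toFinset
            = (S.erase v) \ (ℓ'.take j).toFinset := by
          rw [List.take_succ_cons, List.toFinset_cons]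
          ext w
          simp only [Finset.mem_sdiff, Finset.mem_insert, Finset.mem_erase]
          tauto
        have hget : (v :: ℓ').get ⟨j+1, h⟩ = ℓ'.get ⟨j, hj⟩ := rfl
        rw [hget, hset]
        exact h3 j hj

/-! ### The orientation from a list -/

def posOf (ℓ : List {v : V // v ≠ q}) (v : V) : ℕ :=
  if h : v = q then 0 else ℓ.idxOf ⟨v, h⟩ + 1

lemma posOf_inj (ℓ : List {v : V // v ≠ q}) (hu : ∀ w : {v : V // v ≠ q}, w ∈ ℓ)
    {a b : V} (hab : posOf q ℓ a = posOf q ℓ b) : a = b := by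
  unfold posOf at hab
  by_cases h1 : a = q <;> by_cases h2 : b = q
  · rw [h1, h2]
  · rw [dif_pos h1, dif_neg h2] at hab
    exact absurd hab (by omega)
  · rw [dif_neg h1, dif_pos h2] at hab
    exact absurd hab (by omega)
  · rw [dif_neg h1, dif_neg h2] at hab
    have ha := List.idxOf_lt_length_iff.2 (hu ⟨a, h1⟩)
    have hb := List.idxOf_lt_length_iff.2 (hu ⟨b, h2⟩)
    have hidx : ℓ.idxOf (⟨a, h1⟩ : {v : V // v ≠ q}) = ℓ.idxOf (⟨b, h2⟩ : {v : V // v ≠ q}) := by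
      omega
    have : ℓ.get ⟨ℓ.idxOf ⟨a, h1⟩, ha⟩ = ℓ.get ⟨ℓ.idxOf ⟨b, h2⟩, hb⟩ := by
      congr 1
      exact Fin.ext hidx
    rw [List.idxOf_get, List.idxOf_get] at this
    exact congrArg Subtype.val this

def orientOf (G : Multigraph V) (ℓ : List {v : V // v ≠ q})
    (hu : ∀ w : {v : V // v ≠ q}, w ∈ ℓ) : GraphOrientation G where
  dir u v := if posOf q ℓ u < posOf q ℓ v then G.E u v else 0
  compat u v := by
    show (if posOf q ℓ u < posOf q ℓ v then G.E u v else 0)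
        + (if posOf q ℓ v < posOf q ℓ u then G.E v u else 0) = G.E u v
    rcases lt_trichotomy (posOf q ℓ u) (posOf q ℓ v) with h | h | h
    · rw [if_pos h, if_neg (lt_asymm h)]
      omega
    · have huv : u = v := posOf_inj q ℓ hu h
      subst huv
      simp [G.loopless]
    · rw [if_neg (lt_asymm h), if_pos h, G.symm u v]
      omega

lemma orientOf_indeg_q (G : Multigraph V) (ℓ : List {v : V // v ≠ q})
    (hu : ∀ w : {v : V // v ≠ q}, w ∈ ℓ) : (orientOf q G ℓ hu).indeg q = 0 := by
  apply Finset.sum_eq_zero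
  intro u _
  show (if posOf q ℓ u < posOf q ℓ q then G.E u q else 0) = 0
  rw [if_neg]
  unfold posOf
  rw [dif_pos rfl]
  omega

lemma orientOf_acyclic (G : Multigraph V) (ℓ : List {v : V // v ≠ q})
    (hu : ∀ w : {v : V // v ≠ q}, w ∈ ℓ) : (orientOf q G ℓ hu).Acyclic := by
  intro v hv
  have mono : ∀ a b, 0 < (orientOf q G ℓ hu).dir a b → posOf q ℓ a < posOf q ℓ b := by
    intro a b h
    by_contra h'
    have : (orientOf q G ℓ hu).dir a b = 0 := if_neg h'
    omega
  have h2 := Relation.TransGen.mono mono v v hv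
  have htr : Transitive (fun a b : V => posOf q ℓ a < posOf q ℓ b) :=
    fun _ _ _ h h' => lt_trans h h'
  rw [@Relation.transGen_eq_self _ (fun a b : V => posOf q ℓ a < posOf q ℓ b) ⟨fun _ _ _ h h' => htr h h'⟩] at h2
  exact lt_irrefl _ h2

lemma orientOf_indeg (G : Multigraph V) (ℓ : List {v : V // v ≠ q})
    (hu : ∀ w : {v : V // v ≠ q}, w ∈ ℓ) (v : V) (h : v ≠ q) :
    ((orientOf q G ℓ hu).indeg v : ℤ)
      = outdegC q G (Finset.univ \ (ℓ.take (ℓ.idxOf ⟨v, h⟩)).toFinset) ⟨v, h⟩ := by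
  set i := ℓ.idxOf (⟨v, h⟩ : {v : V // v ≠ q}) with hi
  set T := (ℓ.take i).toFinset with hT
  -- LHS computation
  have hpos : posOf q ℓ v = i + 1 := by unfold posOf; rw [dif_neg h]
  have hindeg : (orientOf q G ℓ hu).indeg v = G.E q v + ∑ w ∈ T, G.E w.1 v := by
    unfold GraphOrientation.indeg
    have hfil : (Finset.univ.filter (fun u => posOf q ℓ u < posOf q ℓ v))
        = insert q (T.image Subtype.val) := by
      ext u
      simp only [Finset.mem_filter, Finset.mem_univ, true_and, Finset.mem_insert,
        Finset.mem_image, hpos]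
      constructor
      · intro hlt
        by_cases hq : u = q
        · exact Or.inl hq
        · refine Or.inr ⟨⟨u, hq⟩, ?_, rfl⟩
          rw [hT, List.mem_toFinset,
            mem_take_iff_indexOf_lt ℓ ⟨u, hq⟩ (hu ⟨u, hq⟩) i]
          unfold posOf at hlt
          rw [dif_neg hq] at hlt
          omega
      · rintro (rfl | ⟨w, hwT, rfl⟩)
        · unfold posOf; rw [dif_pos rfl]; omega
        · unfold posOf
          rw [dif_neg w.2, Subtype.coe_eta]
          have := (mem_take_iff_indexOf_lt ℓ w (hu w) i).1 (List.mem_toFinset.1 (hT ▸ hwT))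
          omega
      -- done
    calc (∑ u, (orientOf q G ℓ hu).dir u v)
        = ∑ u ∈ Finset.univ.filter (fun u => posOf q ℓ u < posOf q ℓ v), G.E u v := by
          rw [Finset.sum_filter]
          rfl
      _ = G.E q v + ∑ w ∈ T, G.E w.1 v := by
          rw [hfil, Finset.sum_insert, Finset.sum_image (by intro a _ b _ hab; exact Subtype.ext hab)]
          intro hmem
          obtain ⟨w, _, hw⟩ := Finset.mem_image.1 hmem
          exact w.2 hw
  -- RHS computation
  have hval : G.val v = G.E v q + ∑ w : {w : V // w ≠ q}, G.E v w.1 := by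
    unfold Multigraph.val
    exact sum_split_q (fun u => G.E v u)
  have hsdiff : (∑ w ∈ Finset.univ \ T, G.E v w.1) + ∑ w ∈ T, G.E v w.1
      = ∑ w : {w : V // w ≠ q}, G.E v w.1 :=
    Finset.sum_sdiff (Finset.subset_univ T)
  have hcast1 : ∑ w ∈ Finset.univ \ T, (G.E v w.1 : ℤ)
      = ((∑ w ∈ Finset.univ \ T, G.E v w.1 : ℕ) : ℤ) := by push_cast; ring
  have hsymm1 : G.E q v = G.E v q := G.symm q v
  have hsymm2 : ∑ w ∈ T, G.E w.1 v = ∑ w ∈ T, G.E v w.1 :=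
    Finset.sum_congr rfl fun w _ => G.symm w.1 v
  rw [hsymm1, hsymm2] at hindeg
  unfold outdegC
  dsimp only
  rw [hcast1]
  omega

/-! ### Every superstable configuration is dominated by an orientation configuration -/

lemma exists_orientation_ge (G : Multigraph V) (c : {v : V // v ≠ q} → ℤ)
    (hc : SuperstableC q G c) :
    ∃ O : GraphOrientation G, (O.Acyclic ∧ O.indeg q = 0 ∧ ∀ v, O.indeg v = 0 → v = q) ∧
      ∀ v : {v : V // v ≠ q}, c v ≤ (O.indeg v.1 : ℤ) - 1 := by
  obtain ⟨ℓ, hnd, htf, hgood⟩ := exists_good_list q G c hc Finset.univ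
  have hu : ∀ w : {v : V // v ≠ q}, w ∈ ℓ := fun w => by
    rw [← List.mem_toFinset, htf]; exact Finset.mem_univ w
  have key : ∀ v : {v : V // v ≠ q}, c v < ((orientOf q G ℓ hu).indeg v.1 : ℤ) := by
    intro v
    have hlt := List.idxOf_lt_length_iff.2 (hu v)
    have hget : ℓ.get ⟨ℓ.idxOf v, hlt⟩ = v := List.idxOf_get hlt
    have := hgood (ℓ.idxOf v) hlt
    rw [hget] at this
    rw [orientOf_indeg q G ℓ hu v.1 v.2]
    have hv : (⟨v.1, v.2⟩ : {v : V // v ≠ q}) = v := Subtype.ext rfl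
    rw [hv]
    exact this
  refine ⟨orientOf q G ℓ hu, ⟨orientOf_acyclic q G ℓ hu, orientOf_indeg_q q G ℓ hu, ?_⟩, ?_⟩
  · intro v hv
    by_contra hvq
    have h1 := key ⟨v, hvq⟩
    have h2 := hc.1 ⟨v, hvq⟩
    rw [hv] at h1
    omega
  · intro v
    have := key v
    omega

/-! ### Maximality -/

lemma maximal_of_orientation (G : Multigraph V) (O : GraphOrientation G)
    (hac : O.Acyclic) (hq : O.indeg q = 0) (hsrc : ∀ v, O.indeg v = 0 → v = q) :
    MaximalSuperstableC q G (fun v => (O.indeg v.1 : ℤ) - 1) := by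
  refine ⟨superstable_of_orientation q G O hac hsrc, ?_⟩
  intro c' hc' hle
  obtain ⟨O', ⟨hac', hq', hsrc'⟩, hge⟩ := exists_orientation_ge q G c' hc'
  have hpt : ∀ v : {v : V // v ≠ q}, (O.indeg v.1 : ℤ) ≤ (O'.indeg v.1 : ℤ) := by
    intro v
    have h1 := hle v
    have h2 := hge v
    simp only at h1
    omega
  have hsum : ∑ v : {v : V // v ≠ q}, (O.indeg v.1 : ℤ)
      = ∑ v : {v : V // v ≠ q}, (O'.indeg v.1 : ℤ) := by
    have h1 := sum_indeg_eq O O'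
    have h2 := sum_split_q (q := q) (fun v => O.indeg v)
    have h3 := sum_split_q (q := q) (fun v => O'.indeg v)
    rw [hq] at h2
    rw [hq'] at h3
    have : ∑ v : {v : V // v ≠ q}, O.indeg v.1 = ∑ v : {v : V // v ≠ q}, O'.indeg v.1 := by
      omega
    push_cast
    exact_mod_cast this
  have heq : ∀ v ∈ (Finset.univ : Finset {v : V // v ≠ q}),
      (O.indeg v.1 : ℤ) = (O'.indeg v.1 : ℤ) :=
    (Finset.sum_eq_sum_iff_of_le (fun v _ => hpt v)).1 hsum
  funext v
  have h1 := hle v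
  have h2 := hge v
  have h3 := heq v (Finset.mem_univ v)
  simp only at h1 ⊢
  omega

/-! ### Injectivity -/

lemma orientation_eq_of_indeg_eq (G : Multigraph V) (O O' : GraphOrientation G)
    (hac : O.Acyclic) (h : ∀ v, O.indeg v = O'.indeg v) : O = O' := by
  have hf : ∀ u v, (O.dir u v : ℤ) - O'.dir u v = -((O.dir v u : ℤ) - O'.dir v u) := by
    intro u v
    have h1 := O.compat u v
    have h2 := O'.compat u v
    omega
  have hcol : ∀ v, ∑ u, ((O.dir u v : ℤ) - O'.dir u v) = 0 := by
    intro v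
    rw [Finset.sum_sub_distrib]
    have hv := h v
    unfold GraphOrientation.indeg at hv
    have c1 : ∑ u, (O.dir u v : ℤ) = ((∑ u, O.dir u v : ℕ) : ℤ) := by push_cast; ring
    have c2 : ∑ u, (O'.dir u v : ℤ) = ((∑ u, O'.dir u v : ℕ) : ℤ) := by push_cast; ring
    rw [c1, c2, hv]
    ring
  have hdir : O.dir = O'.dir := by
    by_contra hne
    have hex : ∃ a b, (O'.dir a b : ℤ) < O.dir a b := by
      have h1 : ∃ a, O.dir a ≠ O'.dir a := by
        by_contra hno
        push_neg at hno
        exact hne (funext hno)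
      obtain ⟨a, ha⟩ := h1
      have h2 : ∃ b, O.dir a b ≠ O'.dir a b := by
        by_contra hno
        push_neg at hno
        exact ha (funext hno)
      obtain ⟨b, hb⟩ := h2
      rcases Nat.lt_or_ge (O'.dir a b) (O.dir a b) with h' | h'
      · exact ⟨a, b, by exact_mod_cast h'⟩
      · refine ⟨b, a, ?_⟩
        have := hf a b
        omega
    obtain ⟨a, b, hab⟩ := hex
    set S := Finset.univ.filter
      (fun v => ∃ w, (O'.dir v w : ℤ) < O.dir v w) with hS
    have hSne : S.Nonempty := by
      refine ⟨a, ?_⟩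
      simp only [hS, Finset.mem_filter, Finset.mem_univ, true_and]
      exact ⟨b, hab⟩
    obtain ⟨v, hvS, hmin⟩ := exists_source_in (fun x y => 0 < O.dir x y) hac S hSne
    obtain ⟨x, hx⟩ : ∃ w, (O'.dir v w : ℤ) < O.dir v w := (Finset.mem_filter.1 hvS).2
    have hneg : (O.dir x v : ℤ) - O'.dir x v < 0 := by
      have := hf v x
      omega
    have hpos : ∃ w, 0 < (O.dir w v : ℤ) - O'.dir w v := by
      by_contra hno
      push_neg at hno
      have hlt : ∑ u, ((O.dir u v : ℤ) - O'.dir u v) < ∑ _u : V, (0 : ℤ) := by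
        apply Finset.sum_lt_sum (fun u _ => hno u)
        exact ⟨x, Finset.mem_univ x, hneg⟩
      rw [Finset.sum_const_zero] at hlt
      have := hcol v
      omega
    obtain ⟨w, hw⟩ := hpos
    have hwS : w ∈ S := by
      simp only [hS, Finset.mem_filter, Finset.mem_univ, true_and]
      exact ⟨v, by omega⟩
    have hdw : 0 < O.dir w v := by omega
    exact hmin w hwS hdw
  rcases O with ⟨d, hc⟩
  rcases O' with ⟨d', hc'⟩
  simp only [GraphOrientation.mk.injEq]
  exact hdir

/-- The map `O ↦ c(O)`, `c(O)(v) = indeg_O(v) - 1`, is a bijection between acyclic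
orientations of `G` with unique source `q` and maximal superstable configurations with
respect to `q`. -/
theorem orientation_superstable_bijection (G : Multigraph V) (hG : G.Connected) :
    Set.BijOn (fun (O : GraphOrientation G) (v : {v : V // v ≠ q}) => (O.indeg v.1 : ℤ) - 1)
      {O : GraphOrientation G | O.Acyclic ∧ O.indeg q = 0 ∧ ∀ v, O.indeg v = 0 → v = q}
      {c : {v : V // v ≠ q} → ℤ | MaximalSuperstableC q G c} := by
  refine ⟨?_, ?_, ?_⟩
  · intro O hO
    obtain ⟨hac, hq, hsrc⟩ := hO
    exact maximal_of_orientation q G O hac hq hsrc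
  · intro O hO O' hO' heq
    apply orientation_eq_of_indeg_eq G O O' hO.1
    intro v
    by_cases h : v = q
    · subst h
      rw [hO.2.1, hO'.2.1]
    · have := congrFun heq ⟨v, h⟩
      simp only at this
      omega
  · intro c hc
    obtain ⟨O, hO, hge⟩ := exists_orientation_ge q G c hc.1
    refine ⟨O, hO, ?_⟩
    have hsup := superstable_of_orientation q G O hO.1 hO.2.2
    exact hc.2 _ hsup hge
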